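/- For m ≥ 1 and n in the range m+1 ≤ n ≤ 2m, the difference φ2(n) - φ2(n+1) = ∑_{ℓ=n-1-m}^{m} C(m,ℓ) * C(ℓ, n-1-m) is at least 2, where φ2(n) = ∑_{ℓ=0}^m ∑_{t=max(n-1-ℓ, m-ℓ)}^m C(m,ℓ) C(ℓ, ℓ+t-m). -/

import Mathlib

/-- `φ₂(n) = ∑_{ℓ=0}^m ∑_{t=max(n-1-ℓ, m-ℓ)}^m C(m,ℓ) C(ℓ, ℓ+t-m)`. -/
def phi2 (m n : ℕ) : ℕ :=
  ∑ ℓ ∈ Finset.range (m + 1), ∑ t ∈ Finset.Icc (max (n - 1 - ℓ) (m - ℓ)) m,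
    m.choose ℓ * ℓ.choose (ℓ + t - m)

lemma phi2_step (m n : ℕ) (hn1 : m + 1 ≤ n) (hn2 : n ≤ 2 * m) :
    phi2 m n = phi2 m (n + 1) +
      ∑ ℓ ∈ Finset.Icc (n - 1 - m) m, m.choose ℓ * ℓ.choose (n - 1 - m) := by
  set k := n - 1 - m with hk
  have hsum : ∑ ℓ ∈ Finset.Icc k m, m.choose ℓ * ℓ.choose k
      = ∑ ℓ ∈ Finset.range (m + 1), m.choose ℓ * ℓ.choose k := by
    rw [Finset.range_eq_Ico, ← Finset.Ico_add_one_right_eq_Icc]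
    rw [← Finset.sum_Ico_consecutive _ (by omega : 0 ≤ k) (by omega : k ≤ m + 1)]
    rw [right_eq_add]
    apply Finset.sum_eq_zero
    intro ℓ hℓ
    simp only [Finset.mem_Ico] at hℓ
    rw [Nat.choose_eq_zero_of_lt (show ℓ < k by omega), mul_zero]
  rw [hsum, phi2, phi2, ← Finset.sum_add_distrib]
  apply Finset.sum_congr rfl
  intro ℓ hℓ
  simp only [Finset.mem_range] at hℓ
  have hℓm : ℓ ≤ m := by omega
  have hmax1 : max (n - 1 - ℓ) (m - ℓ) = n - 1 - ℓ := by omega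
  have hmax2 : max (n + 1 - 1 - ℓ) (m - ℓ) = n - ℓ := by
    rw [show n + 1 - 1 = n from rfl]; omega
  rw [hmax1, hmax2]
  by_cases hcase : k ≤ ℓ
  · have hins : Finset.Icc (n - 1 - ℓ) m = insert (n - 1 - ℓ) (Finset.Icc (n - ℓ) m) := by
      ext x
      simp only [Finset.mem_Icc, Finset.mem_insert]
      omega
    rw [hins, Finset.sum_insert (by simp only [Finset.mem_Icc]; omega)]
    have : ℓ + (n - 1 - ℓ) - m = k := by omega
    rw [this, add_comm]
  · rw [Finset.Icc_eq_empty (show ¬ n - 1 - ℓ ≤ m by omega),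
      Finset.Icc_eq_empty (show ¬ n - ℓ ≤ m by omega),
      Nat.choose_eq_zero_of_lt (show ℓ < k by omega)]
    simp

theorem stmt7 (m n : ℕ) (hm : 1 ≤ m) (hn1 : m + 1 ≤ n) (hn2 : n ≤ 2 * m) :
    (phi2 m n : ℤ) - phi2 m (n + 1)
        = ∑ ℓ ∈ Finset.Icc (n - 1 - m) m, (m.choose ℓ * ℓ.choose (n - 1 - m) : ℤ) ∧
      2 ≤ (phi2 m n : ℤ) - phi2 m (n + 1) := by
  have hstep := phi2_step m n hn1 hn2
  set k := n - 1 - m with hk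
  have heq : (phi2 m n : ℤ) - phi2 m (n + 1)
      = ∑ ℓ ∈ Finset.Icc k m, (m.choose ℓ * ℓ.choose k : ℤ) := by
    have := congrArg (fun x : ℕ => (x : ℤ)) hstep
    push_cast at this
    linarith
  refine ⟨heq, ?_⟩
  rw [heq]
  have hkm : k < m := by omega
  have hsub : ({k, m} : Finset ℕ) ⊆ Finset.Icc k m := by
    intro x hx
    simp only [Finset.mem_insert, Finset.mem_singleton] at hx
    simp only [Finset.mem_Icc]
    omega
  have hpair : ∑ ℓ ∈ ({k, m} : Finset ℕ), (m.choose ℓ * ℓ.choose k : ℤ)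
      = m.choose k * k.choose k + m.choose m * m.choose k := by
    rw [Finset.sum_pair (by omega)]
  have hle : ∑ ℓ ∈ ({k, m} : Finset ℕ), (m.choose ℓ * ℓ.choose k : ℤ)
      ≤ ∑ ℓ ∈ Finset.Icc k m, (m.choose ℓ * ℓ.choose k : ℤ) := by
    apply Finset.sum_le_sum_of_subset_of_nonneg hsub
    intro i _ _
    positivity
  have h1 : (1 : ℤ) ≤ m.choose k := by
    exact_mod_cast Nat.one_le_iff_ne_zero.mpr (Nat.choose_pos (by omega)).ne'
  rw [hpair, Nat.choose_self, Nat.choose_self] at hle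
  push_cast at hle
  linarith
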